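/- Lemma (characterization of non-Nash commitment optimal strategies): Let Γ be a 2×2 bimatrix game that is non-degenerate for the leader (player I). Then there exists a commitment optimal strategy x^L ∈ X^L with x^L ∉ NE(X) if and only if both of the following hold: (ℓ1) some pure strategy of player I is strongly dominated (there exist i and x' ∈ X with α(x',e_j) > α(e_i,e_j) for all j), and (ℓ2) player I has an equalizing strategy x^d ∈ X over the follower's payoffs (i.e. (x^dᵀB)_1 = (x^dᵀB)_2) such that for every Nash equilibrium (x^N,y^N) of Γ there is a pure strategy j with α(x^d,e_j) ≥ α(x^N,y^N). Moreover, in this case Y^L = NE(Y), i.e. the commitment optimal strategies of player II (as leader in Γ^II) coincide with his Nash equilibrium strategies. -/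
import Mathlib


open Matrix

noncomputable section

/-- The set of mixed strategies: the standard simplex in `ℝ^m`. -/
def Simp (m : ℕ) : Set (Fin m → ℝ) := stdSimplex ℝ (Fin m)

/-- Bilinear payoff `xᵀ A y`. -/
def pay {m n : ℕ} (A : Matrix (Fin m) (Fin n) ℝ) (x : Fin m → ℝ) (y : Fin n → ℝ) : ℝ :=
  x ⬝ᵥ A.mulVec y

/-- Payoff of a mixed strategy `x` against the pure strategy `j`: `α(x, e_j) = (xᵀA)_j`. -/
def purePay {m n : ℕ} (A : Matrix (Fin m) (Fin n) ℝ) (x : Fin m → ℝ) (j : Fin n) : ℝ :=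
  Matrix.vecMul x A j

/-- Pure best replies of player II against `x`. -/
def BRII {m n : ℕ} (B : Matrix (Fin m) (Fin n) ℝ) (x : Fin m → ℝ) : Set (Fin n) :=
  {j | ∀ k, purePay B x k ≤ purePay B x j}

/-- Best-reply region `X(j)` of column `j`. -/
def XReg {m n : ℕ} (B : Matrix (Fin m) (Fin n) ℝ) (j : Fin n) : Set (Fin m → ℝ) :=
  {x ∈ Simp m | j ∈ BRII B x}

/-- `D`: columns whose best-reply region has a fully mixed point. -/
def Dset {m n : ℕ} (B : Matrix (Fin m) (Fin n) ℝ) : Set (Fin n) :=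
  {j | ∃ x ∈ XReg B j, ∀ i, 0 < x i}

/-- `E(j)`: columns of `B` payoff-equivalent to column `j`. -/
def Ecols {m n : ℕ} (B : Matrix (Fin m) (Fin n) ℝ) (j : Fin n) : Set (Fin n) :=
  {k | ∀ i, B i k = B i j}

/-- `min_j α(x, e_j)`. -/
def minPure {m n : ℕ} (A : Matrix (Fin m) (Fin n) ℝ) (x : Fin m → ℝ) : ℝ :=
  sInf {w | ∃ j, w = purePay A x j}

/-- `max_j α(x, e_j)`. -/
def maxPure {m n : ℕ} (A : Matrix (Fin m) (Fin n) ℝ) (x : Fin m → ℝ) : ℝ :=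
  sSup {w | ∃ j, w = purePay A x j}

/-- `max_{j ∈ BR_II(x)} α(x, e_j)`. -/
def maxBR {m n : ℕ} (A B : Matrix (Fin m) (Fin n) ℝ) (x : Fin m → ℝ) : ℝ :=
  sSup {w | ∃ j ∈ BRII B x, w = purePay A x j}

/-- Matrix game value `v_A = max_{x ∈ X} min_j α(x, e_j)`. -/
def matVal {m n : ℕ} (A : Matrix (Fin m) (Fin n) ℝ) : ℝ :=
  sSup {v | ∃ x ∈ Simp m, v = minPure A x}

/-- `min_{k ∈ E(j)} α(x, e_k)`. -/
def minE {m n : ℕ} (A B : Matrix (Fin m) (Fin n) ℝ) (j : Fin n) (x : Fin m → ℝ) : ℝ :=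
  sInf {w | ∃ k ∈ Ecols B j, w = purePay A x k}

/-- Commitment value `α^L = max_{j∈D} max_{x∈X(j)} min_{k∈E(j)} α(x,e_k)`. -/
def alphaL {m n : ℕ} (A B : Matrix (Fin m) (Fin n) ℝ) : ℝ :=
  sSup {v | ∃ j ∈ Dset B, ∃ x ∈ XReg B j, v = minE A B j x}

/-- Highest leader payoff `α^H = max_{j : X(j)≠∅} max_{x∈X(j)} α(x,e_j)`. -/
def alphaH {m n : ℕ} (A B : Matrix (Fin m) (Fin n) ℝ) : ℝ :=
  sSup {v | ∃ j, ∃ x ∈ XReg B j, v = purePay A x j}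

/-- Commitment optimal strategies of the leader (player I). -/
def XLset {m n : ℕ} (A B : Matrix (Fin m) (Fin n) ℝ) : Set (Fin m → ℝ) :=
  {x | ∃ j ∈ Dset B, x ∈ XReg B j ∧ minE A B j x = alphaL A B}

/-- Non-degeneracy for player I: no mixed strategy of player I has more pure best
replies (among player II's pure strategies) than the size of its support. -/
def NondegFor {m n : ℕ} (B : Matrix (Fin m) (Fin n) ℝ) : Prop :=
  ∀ x ∈ Simp m, (BRII B x).ncard ≤ {i | x i ≠ 0}.ncard

/-- Nash equilibrium of the bimatrix game `(A,B)`. -/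
def isNE {m n : ℕ} (A B : Matrix (Fin m) (Fin n) ℝ) (x : Fin m → ℝ) (y : Fin n → ℝ) : Prop :=
  x ∈ Simp m ∧ y ∈ Simp n ∧
  (∀ x' ∈ Simp m, pay A x' y ≤ pay A x y) ∧
  (∀ y' ∈ Simp n, pay B x y' ≤ pay B x y)

/-- Strategies of player I appearing in some Nash equilibrium. -/
def NEX {m n : ℕ} (A B : Matrix (Fin m) (Fin n) ℝ) : Set (Fin m → ℝ) :=
  {x | ∃ y, isNE A B x y}

/-- Strategies of player II appearing in some Nash equilibrium. -/
def NEY {m n : ℕ} (A B : Matrix (Fin m) (Fin n) ℝ) : Set (Fin n → ℝ) :=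
  {y | ∃ x, isNE A B x y}

/-- Weakly unilaterally competitive bimatrix game. -/
def WUC {m n : ℕ} (A B : Matrix (Fin m) (Fin n) ℝ) : Prop :=
  (∀ x₁ ∈ Simp m, ∀ x₂ ∈ Simp m, ∀ y ∈ Simp n,
    (pay A x₁ y > pay A x₂ y → pay B x₁ y ≤ pay B x₂ y) ∧
    (pay A x₁ y = pay A x₂ y → pay B x₁ y = pay B x₂ y)) ∧
  (∀ y₁ ∈ Simp n, ∀ y₂ ∈ Simp n, ∀ x ∈ Simp m,
    (pay B x y₁ > pay B x y₂ → pay A x y₁ ≤ pay A x y₂) ∧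
    (pay B x y₁ = pay B x y₂ → pay A x y₁ = pay A x y₂))

/-- in a 2×2 bimatrix game non-degenerate for the leader (player I),
there exists a commitment optimal strategy of player I that is not a Nash equilibrium
strategy if and only if (ℓ1) some pure strategy of player I is strongly dominated and
(ℓ2) player I has an equalizing strategy `x^d` over the follower's payoffs such that
for every Nash equilibrium `(x^N,y^N)` there is a pure `j` with `α(x^d,e_j) ≥ α^N`.
Moreover, in this case the commitment optimal strategies of player II (as leader in
`Γ^II`, i.e. in the game with matrices `(Bᵀ, Aᵀ)`) coincide with his Nash equilibrium
strategies: `Y^L = NE(Y)`. -/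
-- ===== infrastructure =====
lemma fin2_cases {i i' : Fin 2} (h : i ≠ i') (k : Fin 2) : k = i ∨ k = i' := by
  revert h; revert i i' k; decide

lemma fin2_pair {j j' : Fin 2} (h : j ≠ j') : (j = 0 ∧ j' = 1) ∨ (j = 1 ∧ j' = 0) := by
  revert h; revert j j'; decide

lemma funext2 {i i' : Fin 2} (h : i ≠ i') {x z : Fin 2 → ℝ}
    (h1 : x i = z i) (h2 : x i' = z i') : x = z := by
  funext k; rcases fin2_cases h k with rfl | rfl <;> assumption

lemma pp_eq (A : Matrix (Fin 2) (Fin 2) ℝ) (x : Fin 2 → ℝ) (j : Fin 2) :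
    purePay A x j = x 0 * A 0 j + x 1 * A 1 j := by
  simp [purePay, Matrix.vecMul, dotProduct, Fin.sum_univ_two]

lemma pp_expand {i i' : Fin 2} (h : i ≠ i') (A : Matrix (Fin 2) (Fin 2) ℝ)
    (x : Fin 2 → ℝ) (l : Fin 2) :
    purePay A x l = x i * A i l + x i' * A i' l := by
  rcases fin2_pair h with ⟨rfl, rfl⟩ | ⟨rfl, rfl⟩ <;> rw [pp_eq] <;> ring

lemma mem_simp {x : Fin 2 → ℝ} : x ∈ Simp 2 ↔ (0 ≤ x 0 ∧ 0 ≤ x 1) ∧ x 0 + x 1 = 1 := by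
  constructor
  · rintro ⟨h1, h2⟩
    exact ⟨⟨h1 0, h1 1⟩, by simpa [Fin.sum_univ_two] using h2⟩
  · rintro ⟨⟨h0, h1⟩, hs⟩
    exact ⟨fun i => by fin_cases i <;> assumption, by simpa [Fin.sum_univ_two] using hs⟩

lemma mem_simp' {i i' : Fin 2} (h : i ≠ i') {x : Fin 2 → ℝ} :
    x ∈ Simp 2 ↔ (0 ≤ x i ∧ 0 ≤ x i') ∧ x i + x i' = 1 := by
  rcases fin2_pair h with ⟨rfl, rfl⟩ | ⟨rfl, rfl⟩
  · exact mem_simp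
  · rw [mem_simp]; constructor <;> rintro ⟨⟨a, b⟩, c⟩ <;> exact ⟨⟨b, a⟩, by linarith⟩

lemma pay_eq (A : Matrix (Fin 2) (Fin 2) ℝ) (x y : Fin 2 → ℝ) :
    pay A x y = x 0 * (A 0 0 * y 0 + A 0 1 * y 1) + x 1 * (A 1 0 * y 0 + A 1 1 * y 1) := by
  simp [pay, Matrix.mulVec, dotProduct, Fin.sum_univ_two]

lemma pay_expand {i i' j j' : Fin 2} (hi : i ≠ i') (hj : j ≠ j')
    (A : Matrix (Fin 2) (Fin 2) ℝ) (x y : Fin 2 → ℝ) :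
    pay A x y = x i * (A i j * y j + A i j' * y j') + x i' * (A i' j * y j + A i' j' * y j') := by
  rcases fin2_pair hi with ⟨rfl, rfl⟩ | ⟨rfl, rfl⟩ <;>
    rcases fin2_pair hj with ⟨rfl, rfl⟩ | ⟨rfl, rfl⟩ <;> rw [pay_eq] <;> ring

lemma pay_decomp_right {j j' : Fin 2} (hj : j ≠ j') (M : Matrix (Fin 2) (Fin 2) ℝ)
    (x y : Fin 2 → ℝ) :
    pay M x y = y j * purePay M x j + y j' * purePay M x j' := by
  rw [pay_expand (show (0:Fin 2) ≠ 1 by decide) hj, pp_expand (show (0:Fin 2) ≠ 1 by decide),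
    pp_expand (show (0:Fin 2) ≠ 1 by decide)]
  ring

lemma pp_single (A : Matrix (Fin 2) (Fin 2) ℝ) (k l : Fin 2) :
    purePay A (Pi.single k (1:ℝ)) l = A k l := by
  fin_cases k <;> simp [pp_eq]

lemma ee_mem (k : Fin 2) : Pi.single k (1:ℝ) ∈ Simp 2 := by
  fin_cases k <;> simp [mem_simp]

lemma pay_single_right (A : Matrix (Fin 2) (Fin 2) ℝ) (x : Fin 2 → ℝ) (l : Fin 2) :
    pay A x (Pi.single l (1:ℝ)) = purePay A x l := by
  fin_cases l <;> simp [pay_eq, pp_eq] <;> ring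

lemma pay_e_left {j j' : Fin 2} (hj : j ≠ j') (A : Matrix (Fin 2) (Fin 2) ℝ)
    (k : Fin 2) (y : Fin 2 → ℝ) :
    pay A (Pi.single k (1:ℝ)) y = A k j * y j + A k j' * y j' := by
  rcases fin2_pair hj with ⟨rfl, rfl⟩ | ⟨rfl, rfl⟩ <;> fin_cases k <;> simp [pay_eq] <;> ring

lemma pay_ee (A : Matrix (Fin 2) (Fin 2) ℝ) (k l : Fin 2) :
    pay A (Pi.single k (1:ℝ)) (Pi.single l (1:ℝ)) = A k l := by
  rw [pay_single_right, pp_single]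

lemma isNE_of {A B : Matrix (Fin 2) (Fin 2) ℝ} {x y : Fin 2 → ℝ}
    (hx : x ∈ Simp 2) (hy : y ∈ Simp 2)
    (hI : ∀ k : Fin 2, pay A (Pi.single k (1:ℝ)) y ≤ pay A x y)
    (hII : ∀ l : Fin 2, pay B x (Pi.single l (1:ℝ)) ≤ pay B x y) :
    isNE A B x y := by
  refine ⟨hx, hy, ?_, ?_⟩
  · intro x' hx'
    rw [mem_simp] at hx'
    have h0 := hI 0; have h1 := hI 1
    have e0 : pay A x' y = x' 0 * pay A (Pi.single (0:Fin 2) (1:ℝ)) y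
        + x' 1 * pay A (Pi.single (1:Fin 2) (1:ℝ)) y := by
      simp [pay_eq]; try ring
    rw [e0]
    have key : x' 0 * pay A (Pi.single (0:Fin 2) (1:ℝ)) y
        + x' 1 * pay A (Pi.single (1:Fin 2) (1:ℝ)) y ≤ (x' 0 + x' 1) * pay A x y := by
      nlinarith [mul_nonneg hx'.1.1 (sub_nonneg.2 h0), mul_nonneg hx'.1.2 (sub_nonneg.2 h1)]
    rw [hx'.2, one_mul] at key
    exact key
  · intro y' hy'
    rw [mem_simp] at hy'
    have h0 := hII 0; have h1 := hII 1
    have e0 : pay B x y' = y' 0 * pay B x (Pi.single (0:Fin 2) (1:ℝ))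
        + y' 1 * pay B x (Pi.single (1:Fin 2) (1:ℝ)) := by
      rw [pay_single_right, pay_single_right, pay_eq, pp_eq, pp_eq]; ring
    rw [e0]
    have key : y' 0 * pay B x (Pi.single (0:Fin 2) (1:ℝ))
        + y' 1 * pay B x (Pi.single (1:Fin 2) (1:ℝ)) ≤ (y' 0 + y' 1) * pay B x y := by
      nlinarith [mul_nonneg hy'.1.1 (sub_nonneg.2 h0), mul_nonneg hy'.1.2 (sub_nonneg.2 h1)]
    rw [hy'.2, one_mul] at key
    exact key

lemma sSup_eq_of {S : Set ℝ} {M : ℝ} (hm : M ∈ S) (hub : ∀ v ∈ S, v ≤ M) : sSup S = M :=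
  le_antisymm (csSup_le ⟨M, hm⟩ hub) (le_csSup ⟨M, fun v hv => hub v hv⟩ hm)

lemma Ecols_eq {B : Matrix (Fin 2) (Fin 2) ℝ} {j j' : Fin 2} (hj : j ≠ j')
    (hB : ∃ r : Fin 2, B r j ≠ B r j') : ∀ l, Ecols B l = {l} := by
  intro l
  ext k
  simp only [Ecols, Set.mem_setOf_eq, Set.mem_singleton_iff]
  constructor
  · intro hk
    by_contra hne
    obtain ⟨r, hr⟩ := hB
    rcases fin2_cases hj k with rfl | rfl <;> rcases fin2_cases hj l with rfl | rfl <;>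
      first | exact hne rfl | exact hr (hk r) | exact hr (hk r).symm
  · rintro rfl; intro i; rfl

lemma minE_eq {A B : Matrix (Fin 2) (Fin 2) ℝ} {j j' : Fin 2} (hj : j ≠ j')
    (hB : ∃ r : Fin 2, B r j ≠ B r j') (l : Fin 2) (x : Fin 2 → ℝ) :
    minE A B l x = purePay A x l := by
  have h := Ecols_eq hj hB l
  have : {w | ∃ k ∈ Ecols B l, w = purePay A x k} = {purePay A x l} := by
    rw [h]; ext w; simp
  rw [minE, this, csInf_singleton]

lemma BRII_mem {B : Matrix (Fin 2) (Fin 2) ℝ} {j j' : Fin 2} (hj : j ≠ j')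
    {x : Fin 2 → ℝ} {l : Fin 2} :
    l ∈ BRII B x ↔ purePay B x j ≤ purePay B x l ∧ purePay B x j' ≤ purePay B x l := by
  constructor
  · intro h; exact ⟨h j, h j'⟩
  · rintro ⟨h1, h2⟩ k
    rcases fin2_cases hj k with rfl | rfl <;> assumption

def MGoal (A B : Matrix (Fin 2) (Fin 2) ℝ) : Prop :=
  ((∃ xL ∈ XLset A B, xL ∉ NEX A B) ↔
      ((∃ i : Fin 2, ∃ x' ∈ Simp 2,
          ∀ j : Fin 2, purePay A (Pi.single i (1 : ℝ)) j < purePay A x' j) ∧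
       (∃ xd ∈ Simp 2, purePay B xd 0 = purePay B xd 1 ∧
          ∀ (xN yN : Fin 2 → ℝ), isNE A B xN yN →
            ∃ j : Fin 2, pay A xN yN ≤ purePay A xd j))) ∧
    ((∃ xL ∈ XLset A B, xL ∉ NEX A B) → XLset Bᵀ Aᵀ = NEY A B)

lemma assemble_neg {A B : Matrix (Fin 2) (Fin 2) ℝ}
    (h1 : ∀ x ∈ XLset A B, x ∈ NEX A B)
    (h2 : ¬ ((∃ i : Fin 2, ∃ x' ∈ Simp 2,
          ∀ j : Fin 2, purePay A (Pi.single i (1 : ℝ)) j < purePay A x' j) ∧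
       (∃ xd ∈ Simp 2, purePay B xd 0 = purePay B xd 1 ∧
          ∀ (xN yN : Fin 2 → ℝ), isNE A B xN yN →
            ∃ j : Fin 2, pay A xN yN ≤ purePay A xd j))) : MGoal A B := by
  have hL : ¬ ∃ xL ∈ XLset A B, xL ∉ NEX A B := by
    rintro ⟨x, hx, hn⟩; exact hn (h1 x hx)
  exact ⟨iff_of_false hL h2, fun h => absurd h hL⟩

lemma no_dom {A : Matrix (Fin 2) (Fin 2) ℝ} {i i' j j' : Fin 2} (hi : i ≠ i') (hj : j ≠ j')
    (h1 : A i' j ≤ A i j) (h2 : A i j' ≤ A i' j') :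
    ¬ ∃ i₀ : Fin 2, ∃ x' ∈ Simp 2,
        ∀ l : Fin 2, purePay A (Pi.single i₀ (1 : ℝ)) l < purePay A x' l := by
  rintro ⟨i₀, x', hx', hlt⟩
  rw [mem_simp' hi] at hx'
  rcases fin2_cases hi i₀ with rfl | rfl
  · have hl := hlt j
    rw [pp_single, pp_expand hi] at hl
    have hs1 : x' i₀ * A i₀ j + x' i' * A i₀ j = A i₀ j := by
      rw [← add_mul, hx'.2, one_mul]
    have hp := mul_nonneg hx'.1.2 (sub_nonneg.2 h1)
    nlinarith
  · have hl := hlt j'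
    rw [pp_single, pp_expand hi] at hl
    have hs1 : x' i * A i₀ j' + x' i₀ * A i₀ j' = A i₀ j' := by
      rw [← add_mul, hx'.2, one_mul]
    have hp := mul_nonneg hx'.1.1 (sub_nonneg.2 h2)
    nlinarith

lemma bdd_alpha {A B : Matrix (Fin 2) (Fin 2) ℝ} {j j' : Fin 2} (hj : j ≠ j')
    (hB : ∃ r : Fin 2, B r j ≠ B r j') :
    BddAbove {v | ∃ l ∈ Dset B, ∃ x ∈ XReg B l, v = minE A B l x} := by
  refine ⟨|A 0 0| + |A 0 1| + |A 1 0| + |A 1 1|, ?_⟩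
  rintro v ⟨l, _, x, hx, rfl⟩
  have hxs : x ∈ Simp 2 := hx.1
  rw [mem_simp] at hxs
  rw [minE_eq hj hB, pp_eq]
  have m0 : ∀ c : ℝ, x 0 * c + x 1 * c = c := fun c => by rw [← add_mul, hxs.2, one_mul]
  rcases fin2_cases (show (0:Fin 2) ≠ 1 by decide) l with rfl | rfl
  · nlinarith [mul_le_mul_of_nonneg_left (le_abs_self (A 0 0)) hxs.1.1,
      mul_le_mul_of_nonneg_left (le_abs_self (A 1 0)) hxs.1.2,
      abs_nonneg (A 0 1), abs_nonneg (A 1 1), m0 |A 0 0|, m0 |A 1 0|,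
      mul_nonneg hxs.1.2 (abs_nonneg (A 0 0)), mul_nonneg hxs.1.1 (abs_nonneg (A 1 0))]
  · nlinarith [mul_le_mul_of_nonneg_left (le_abs_self (A 0 1)) hxs.1.1,
      mul_le_mul_of_nonneg_left (le_abs_self (A 1 1)) hxs.1.2,
      abs_nonneg (A 0 0), abs_nonneg (A 1 0), m0 |A 0 1|, m0 |A 1 1|,
      mul_nonneg hxs.1.2 (abs_nonneg (A 0 1)), mul_nonneg hxs.1.1 (abs_nonneg (A 1 1))]

lemma equalizer_facts {B : Matrix (Fin 2) (Fin 2) ℝ} {i i' j j' : Fin 2}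
    (hi : i ≠ i') (hj : j ≠ j')
    (hbj : B i j' < B i j) (hbj' : B i' j < B i' j') :
    ∃ xs : Fin 2 → ℝ, xs ∈ Simp 2 ∧ (∀ k, 0 < xs k) ∧
      purePay B xs j = purePay B xs j' ∧
      (∀ x ∈ Simp 2, purePay B x j = purePay B x j' → x = xs) ∧
      (∀ x ∈ Simp 2, purePay B x j' ≤ purePay B x j → xs i ≤ x i) ∧
      (∀ x ∈ Simp 2, purePay B x j ≤ purePay B x j' → x i ≤ xs i) := by
  have ht : 0 < (B i j - B i j') + (B i' j' - B i' j) := by linarith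
  set F : Fin 2 → ℝ := fun k => if k = i
      then (B i' j' - B i' j) / ((B i j - B i j') + (B i' j' - B i' j))
      else (B i j - B i j') / ((B i j - B i j') + (B i' j' - B i' j)) with hF
  have hFi : F i = (B i' j' - B i' j) / ((B i j - B i j') + (B i' j' - B i' j)) := by
    rw [hF]; simp
  have hFi' : F i' = (B i j - B i j') / ((B i j - B i j') + (B i' j' - B i' j)) := by
    rw [hF]; simp [hi.symm]
  have hFpos : 0 < F i := by rw [hFi]; exact div_pos (by linarith) ht
  have hFpos' : 0 < F i' := by rw [hFi']; exact div_pos (by linarith) ht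
  have hFsum : F i + F i' = 1 := by rw [hFi, hFi']; field_simp; ring
  have hFmem : F ∈ Simp 2 := (mem_simp' hi).2 ⟨⟨hFpos.le, hFpos'.le⟩, hFsum⟩
  refine ⟨F, hFmem, ?_, ?_, ?_, ?_, ?_⟩
  · intro k; rcases fin2_cases hi k with rfl | rfl <;> assumption
  · rw [pp_expand hi, pp_expand hi, hFi, hFi']; field_simp; ring
  · intro x hxS hxe
    rw [mem_simp' hi] at hxS
    rw [pp_expand hi, pp_expand hi] at hxe
    refine funext2 hi ?_ ?_
    · rw [hFi, eq_div_iff ht.ne']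
      linear_combination hxe + (B i' j' - B i' j) * hxS.2
    · rw [hFi', eq_div_iff ht.ne']
      linear_combination -hxe + (B i j - B i j') * hxS.2
  · intro x hxS hle
    rw [mem_simp' hi] at hxS
    rw [pp_expand hi, pp_expand hi] at hle
    rw [hFi, div_le_iff₀ ht]
    nlinarith [hxS.2]
  · intro x hxS hle
    rw [mem_simp' hi] at hxS
    rw [pp_expand hi, pp_expand hi] at hle
    rw [hFi, le_div_iff₀ ht]
    nlinarith [hxS.2]

lemma M0 {A B : Matrix (Fin 2) (Fin 2) ℝ} {j j' : Fin 2} (hj : j ≠ j')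
    (hb : ∀ r : Fin 2, B r j' < B r j) : MGoal A B := by
  have hBne : ∃ r : Fin 2, B r j ≠ B r j' := ⟨0, (hb 0).ne'⟩
  have hD' : j' ∉ Dset B := by
    rintro ⟨x, ⟨hxS, hxBR⟩, hpos⟩
    have h : purePay B x j ≤ purePay B x j' := hxBR j
    rw [pp_eq, pp_eq] at h
    nlinarith [mul_pos (hpos 0) (sub_pos.2 (hb 0)), mul_pos (hpos 1) (sub_pos.2 (hb 1))]
  have hsub : ∀ x ∈ XLset A B, x ∈ NEX A B := by
    rintro x ⟨j₀, hj₀D, ⟨hxS, hxBR⟩, hmin⟩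
    have hj₀ : j₀ = j := by
      rcases fin2_cases hj j₀ with rfl | rfl
      · rfl
      · exact absurd hj₀D hD'
    rw [hj₀] at hj₀D hxBR hmin
    rw [minE_eq hj hBne] at hmin
    refine ⟨Pi.single j (1:ℝ), isNE_of hxS (ee_mem j) ?_ ?_⟩
    · intro k
      rw [pay_ee, pay_single_right]
      have hek : Pi.single k (1:ℝ) ∈ XReg B j := by
        refine ⟨ee_mem k, ?_⟩
        intro l
        rw [pp_single, pp_single]
        rcases fin2_cases hj l with rfl | rfl
        · exact le_refl _
        · exact (hb k).le
      have hmem : purePay A (Pi.single k (1:ℝ)) j ∈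
          {v | ∃ l ∈ Dset B, ∃ x ∈ XReg B l, v = minE A B l x} :=
        ⟨j, hj₀D, Pi.single k 1, hek, (minE_eq hj hBne j _).symm⟩
      have h2 : purePay A (Pi.single k (1:ℝ)) j ≤ alphaL A B :=
        le_csSup (bdd_alpha hj hBne) hmem
      rw [pp_single] at h2
      rw [hmin]
      exact h2
    · intro l
      rw [pay_single_right, pay_single_right]
      exact hxBR l
  refine assemble_neg hsub ?_
  rintro ⟨-, xd, hxdS, heq, -⟩
  rw [mem_simp] at hxdS
  have heq' : purePay B xd j = purePay B xd j' := by
    rcases fin2_pair hj with ⟨rfl, rfl⟩ | ⟨rfl, rfl⟩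
    · exact heq
    · exact heq.symm
  rw [pp_eq, pp_eq] at heq'
  have hcase : 0 < xd 0 ∨ 0 < xd 1 := by
    rcases lt_or_eq_of_le hxdS.1.1 with h | h
    · exact Or.inl h
    · right; rw [← h] at hxdS; linarith [hxdS.2]
  rcases hcase with h | h
  · nlinarith [mul_pos h (sub_pos.2 (hb 0)), mul_nonneg hxdS.1.2 (sub_pos.2 (hb 1)).le]
  · nlinarith [mul_pos h (sub_pos.2 (hb 1)), mul_nonneg hxdS.1.1 (sub_pos.2 (hb 0)).le]

lemma M2 {A B : Matrix (Fin 2) (Fin 2) ℝ} {i i' j j' : Fin 2} (hi : i ≠ i') (hj : j ≠ j')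
    (hbj : B i j' < B i j) (hbj' : B i' j < B i' j')
    (hda : A i' j ≤ A i j) (hda' : A i j' ≤ A i' j') : MGoal A B := by
  have hBne : ∃ r : Fin 2, B r j ≠ B r j' := ⟨i, hbj.ne'⟩
  obtain ⟨xs, hxsS, hxspos, hxseq, hxsuniq, hcmp1, hcmp2⟩ := equalizer_facts hi hj hbj hbj'
  have hxsBR : ∀ l : Fin 2, l ∈ BRII B xs := by
    intro l k
    rcases fin2_cases hj k with rfl | rfl <;> rcases fin2_cases hj l with rfl | rfl <;>
      first
        | exact le_refl _
        | exact le_of_eq hxseq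
        | exact le_of_eq hxseq.symm
  have hDj : j ∈ Dset B := ⟨xs, ⟨hxsS, hxsBR j⟩, hxspos⟩
  have hDj' : j' ∈ Dset B := ⟨xs, ⟨hxsS, hxsBR j'⟩, hxspos⟩
  have hei : Pi.single i (1:ℝ) ∈ XReg B j := by
    refine ⟨ee_mem i, ?_⟩
    intro l
    rw [pp_single, pp_single]
    rcases fin2_cases hj l with rfl | rfl
    · exact le_refl _
    · exact hbj.le
  have hei' : Pi.single i' (1:ℝ) ∈ XReg B j' := by
    refine ⟨ee_mem i', ?_⟩
    intro l
    rw [pp_single, pp_single]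
    rcases fin2_cases hj l with rfl | rfl
    · exact hbj'.le
    · exact le_refl _
  have hub1 : A i j ≤ alphaL A B :=
    le_csSup (bdd_alpha hj hBne) ⟨j, hDj, _, hei, by rw [minE_eq hj hBne, pp_single]⟩
  have hub1' : A i' j' ≤ alphaL A B :=
    le_csSup (bdd_alpha hj hBne) ⟨j', hDj', _, hei', by rw [minE_eq hj hBne, pp_single]⟩
  have hAk : ∀ k l : Fin 2, A k l ≤ alphaL A B := by
    intro k l
    rcases fin2_cases hi k with rfl | rfl <;> rcases fin2_cases hj l with rfl | rfl
    · exact hub1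
    · exact le_trans hda' hub1'
    · exact le_trans hda hub1
    · exact hub1'
  refine assemble_neg ?_ ?_
  · rintro x ⟨j₀, hj₀D, ⟨hxS, hxBR⟩, hmin⟩
    rw [minE_eq hj hBne] at hmin
    refine ⟨Pi.single j₀ (1:ℝ), isNE_of hxS (ee_mem j₀) ?_ ?_⟩
    · intro k
      rw [pay_ee, pay_single_right, hmin]
      exact hAk k j₀
    · intro l
      rw [pay_single_right, pay_single_right]
      exact hxBR l
  · rintro ⟨hl1, -⟩
    exact no_dom hi hj hda hda' hl1

lemma mixedNE {A B : Matrix (Fin 2) (Fin 2) ℝ} {i i' j j' : Fin 2} (hi : i ≠ i') (hj : j ≠ j')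
    {xs : Fin 2 → ℝ} (hxsS : xs ∈ Simp 2) (hxseq : purePay B xs j = purePay B xs j')
    (hs : 0 < (A i' j - A i j) + (A i j' - A i' j'))
    (hdb : A i j ≤ A i' j) (hdb' : A i' j' ≤ A i j') :
    ∃ y, isNE A B xs y := by
  set Y : Fin 2 → ℝ := fun l => if l = j
      then (A i j' - A i' j') / ((A i' j - A i j) + (A i j' - A i' j'))
      else (A i' j - A i j) / ((A i' j - A i j) + (A i j' - A i' j')) with hY
  have hYj : Y j = (A i j' - A i' j') / ((A i' j - A i j) + (A i j' - A i' j')) := by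
    rw [hY]; simp
  have hYj' : Y j' = (A i' j - A i j) / ((A i' j - A i j) + (A i j' - A i' j')) := by
    rw [hY]; simp [hj.symm]
  have hY0 : 0 ≤ Y j := by rw [hYj]; exact div_nonneg (by linarith) hs.le
  have hY0' : 0 ≤ Y j' := by rw [hYj']; exact div_nonneg (by linarith) hs.le
  have hYsum : Y j + Y j' = 1 := by rw [hYj, hYj']; field_simp; ring
  have hYmem : Y ∈ Simp 2 := (mem_simp' hj).2 ⟨⟨hY0, hY0'⟩, hYsum⟩
  have hxsS' := (mem_simp' hi).1 hxsS
  have hind : A i j * Y j + A i j' * Y j' = A i' j * Y j + A i' j' * Y j' := by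
    rw [hYj, hYj']; field_simp; ring
  have hcommon : pay A xs Y = A i j * Y j + A i j' * Y j' := by
    rw [pay_expand hi hj]
    have e2 : xs i' = 1 - xs i := by linarith [hxsS'.2]
    rw [e2]
    linear_combination (1 - xs i) * hind.symm
  have hI : ∀ k : Fin 2, pay A (Pi.single k (1:ℝ)) Y ≤ pay A xs Y := by
    intro k
    rw [pay_e_left hj, hcommon]
    rcases fin2_cases hi k with rfl | rfl
    · exact le_refl _
    · exact le_of_eq hind.symm
  have hII : ∀ l : Fin 2, pay B xs (Pi.single l (1:ℝ)) ≤ pay B xs Y := by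
    intro l
    rw [pay_single_right, pay_decomp_right hj]
    have hpay : Y j * purePay B xs j + Y j' * purePay B xs j' = purePay B xs j := by
      linear_combination (Y j') * hxseq.symm + (purePay B xs j) * hYsum
    rw [hpay]
    rcases fin2_cases hj l with rfl | rfl
    · exact le_refl _
    · exact le_of_eq hxseq.symm
  exact ⟨Y, isNE_of hxsS hYmem hI hII⟩

lemma M3 {A B : Matrix (Fin 2) (Fin 2) ℝ} {i i' j j' : Fin 2} (hi : i ≠ i') (hj : j ≠ j')
    (hbj : B i j' < B i j) (hbj' : B i' j < B i' j')
    (hdb : A i j ≤ A i' j) (hdb' : A i' j' ≤ A i j') : MGoal A B := by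
  have hBne : ∃ r : Fin 2, B r j ≠ B r j' := ⟨i, hbj.ne'⟩
  obtain ⟨xs, hxsS, hxspos, hxseq, hxsuniq, hcmp1, hcmp2⟩ := equalizer_facts hi hj hbj hbj'
  have hxsS' := (mem_simp' hi).1 hxsS
  have hxsBR : ∀ l : Fin 2, l ∈ BRII B xs := by
    intro l k
    rcases fin2_cases hj k with rfl | rfl <;> rcases fin2_cases hj l with rfl | rfl <;>
      first
        | exact le_refl _
        | exact le_of_eq hxseq
        | exact le_of_eq hxseq.symm
  refine assemble_neg ?_ ?_
  · rintro x ⟨j₀, hj₀D, ⟨hxS, hxBR⟩, hmin⟩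
    rw [minE_eq hj hBne] at hmin
    have hxS' := (mem_simp' hi).1 hxS
    have e1 : x i' = 1 - x i := by linarith [hxS'.2]
    have e2 : xs i' = 1 - xs i := by linarith [hxsS'.2]
    rcases fin2_cases hj j₀ with hq | hq
    · rw [hq] at hj₀D hxBR hmin
      by_cases hAeq : A i j = A i' j
      · refine ⟨Pi.single j (1:ℝ), isNE_of hxS (ee_mem j) ?_ ?_⟩
        · intro k
          rw [pay_ee, pay_single_right, pp_expand hi, hAeq, e1]
          rcases fin2_cases hi k with rfl | rfl
          · rw [hAeq]; nlinarith
          · nlinarith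
        · intro l
          rw [pay_single_right, pay_single_right]
          exact hxBR l
      · have hstrict : A i j < A i' j := lt_of_le_of_ne hdb hAeq
        have h1 : xs i ≤ x i := hcmp1 x hxS (hxBR j')
        have hubxs : purePay A xs j ≤ alphaL A B :=
          le_csSup (bdd_alpha hj hBne) ⟨j, hj₀D, xs, ⟨hxsS, hxsBR j⟩, (minE_eq hj hBne j xs).symm⟩
        have hxle : purePay A x j ≤ purePay A xs j := by
          rw [pp_expand hi, pp_expand hi, e1, e2]
          nlinarith [mul_nonneg (sub_nonneg.2 h1) (sub_nonneg.2 hdb)]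
        have hxeq : purePay A x j = purePay A xs j := le_antisymm hxle (by rw [hmin]; exact hubxs)
        have hxixsi : x i = xs i := by
          rw [pp_expand hi, pp_expand hi, e1, e2] at hxeq
          by_contra hne
          have h2 : xs i < x i := lt_of_le_of_ne h1 (Ne.symm hne)
          nlinarith [mul_pos (sub_pos.2 h2) (sub_pos.2 hstrict)]
        have hxxs : x = xs := funext2 hi hxixsi (by rw [e1, e2, hxixsi])
        rw [hxxs]
        exact mixedNE hi hj hxsS hxseq (by linarith) hdb hdb'
    · rw [hq] at hj₀D hxBR hmin
      by_cases hAeq : A i' j' = A i j'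
      · refine ⟨Pi.single j' (1:ℝ), isNE_of hxS (ee_mem j') ?_ ?_⟩
        · intro k
          rw [pay_ee, pay_single_right, pp_expand hi, hAeq, e1]
          rcases fin2_cases hi k with rfl | rfl
          · nlinarith
          · rw [hAeq]; nlinarith
        · intro l
          rw [pay_single_right, pay_single_right]
          exact hxBR l
      · have hstrict : A i' j' < A i j' := lt_of_le_of_ne hdb' hAeq
        have h1 : x i ≤ xs i := hcmp2 x hxS (hxBR j)
        have hubxs : purePay A xs j' ≤ alphaL A B :=
          le_csSup (bdd_alpha hj hBne)
            ⟨j', hj₀D, xs, ⟨hxsS, hxsBR j'⟩, (minE_eq hj hBne j' xs).symm⟩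
        have hxle : purePay A x j' ≤ purePay A xs j' := by
          rw [pp_expand hi, pp_expand hi, e1, e2]
          nlinarith [mul_nonneg (sub_nonneg.2 h1) (sub_nonneg.2 hdb')]
        have hxeq : purePay A x j' = purePay A xs j' :=
          le_antisymm hxle (by rw [hmin]; exact hubxs)
        have hxixsi : x i = xs i := by
          rw [pp_expand hi, pp_expand hi, e1, e2] at hxeq
          by_contra hne
          have h2 : x i < xs i := lt_of_le_of_ne h1 hne
          nlinarith [mul_pos (sub_pos.2 h2) (sub_pos.2 hstrict)]
        have hxxs : x = xs := funext2 hi hxixsi (by rw [e1, e2, hxixsi])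
        rw [hxxs]
        exact mixedNE hi hj hxsS hxseq (by linarith) hdb hdb'
  · rintro ⟨hl1, -⟩
    exact no_dom hi.symm hj hdb hdb' hl1

lemma M1 {A B : Matrix (Fin 2) (Fin 2) ℝ} {i i' j j' : Fin 2} (hi : i ≠ i') (hj : j ≠ j')
    (hbj : B i j' < B i j) (hbj' : B i' j < B i' j')
    (hdj : A i' j < A i j) (hdj' : A i' j' < A i j') : MGoal A B := by
  have hBne : ∃ r : Fin 2, B r j ≠ B r j' := ⟨i, hbj.ne'⟩
  obtain ⟨xs, hxsS, hxspos, hxseq, hxsuniq, hcmp1, hcmp2⟩ := equalizer_facts hi hj hbj hbj'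
  have hxsS' := (mem_simp' hi).1 hxsS
  have hxsBR : ∀ l : Fin 2, l ∈ BRII B xs := by
    intro l k
    rcases fin2_cases hj k with rfl | rfl <;> rcases fin2_cases hj l with rfl | rfl <;>
      first
        | exact le_refl _
        | exact le_of_eq hxseq
        | exact le_of_eq hxseq.symm
  have hDj : j ∈ Dset B := ⟨xs, ⟨hxsS, hxsBR j⟩, hxspos⟩
  have hDj' : j' ∈ Dset B := ⟨xs, ⟨hxsS, hxsBR j'⟩, hxspos⟩
  have hei : Pi.single i (1:ℝ) ∈ XReg B j := by
    refine ⟨ee_mem i, ?_⟩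
    intro l
    rw [pp_single, pp_single]
    rcases fin2_cases hj l with rfl | rfl
    · exact le_refl _
    · exact hbj.le
  -- strict preference of player I for row i against any mixed y
  have hRdiff : ∀ y : Fin 2 → ℝ, y ∈ Simp 2 →
      A i' j * y j + A i' j' * y j' < A i j * y j + A i j' * y j' := by
    intro y hyS
    have hyS' := (mem_simp' hj).1 hyS
    by_cases h0 : y j = 0
    · have h1 : y j' = 1 := by linarith [hyS'.2]
      rw [h0, h1]; ring_nf; nlinarith
    · have hpos : 0 < y j := lt_of_le_of_ne hyS'.1.1 (Ne.symm h0)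
      nlinarith [mul_pos hpos (sub_pos.2 hdj), mul_nonneg hyS'.1.2 (sub_pos.2 hdj').le]
  -- uniqueness of the Nash equilibrium
  have huniq : ∀ x y, isNE A B x y → x = Pi.single i (1:ℝ) ∧ y = Pi.single j (1:ℝ) := by
    intro x y hNE'
    obtain ⟨hxS, hyS, hI, hII⟩ := hNE'
    have hxS' := (mem_simp' hi).1 hxS
    have hyS' := (mem_simp' hj).1 hyS
    have hrd := hRdiff y hyS
    have hIe := hI (Pi.single i (1:ℝ)) (ee_mem i)
    rw [pay_e_left hj, pay_expand hi hj] at hIe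
    have hxi' : x i' = 0 := by
      by_contra hne
      have hpos : 0 < x i' := lt_of_le_of_ne hxS'.1.2 (Ne.symm hne)
      have e1 : x i = 1 - x i' := by linarith [hxS'.2]
      rw [e1] at hIe
      nlinarith [mul_pos hpos (sub_pos.2 hrd)]
    have hxeq : x = Pi.single i (1:ℝ) := by
      refine funext2 hi ?_ ?_
      · rw [Pi.single_eq_same]; linarith [hxS'.2]
      · rw [Pi.single_eq_of_ne hi.symm]; exact hxi'
    have hIIe := hII (Pi.single j (1:ℝ)) (ee_mem j)
    rw [pay_single_right, hxeq, pp_single, pay_e_left hj] at hIIe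
    have hyj' : y j' = 0 := by
      by_contra hne
      have hpos : 0 < y j' := lt_of_le_of_ne hyS'.1.2 (Ne.symm hne)
      have e1 : y j = 1 - y j' := by linarith [hyS'.2]
      rw [e1] at hIIe
      nlinarith [mul_pos hpos (sub_pos.2 hbj)]
    refine ⟨hxeq, funext2 hj ?_ ?_⟩
    · rw [Pi.single_eq_same]; linarith [hyS'.2]
    · rw [Pi.single_eq_of_ne hj.symm]; exact hyj'
  -- existence of the pure Nash equilibrium
  have hNE : isNE A B (Pi.single i (1:ℝ)) (Pi.single j (1:ℝ)) := by
    refine isNE_of (ee_mem i) (ee_mem j) ?_ ?_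
    · intro k
      rw [pay_ee, pay_ee]
      rcases fin2_cases hi k with rfl | rfl
      · exact le_refl _
      · exact hdj.le
    · intro l
      rw [pay_ee, pay_ee]
      rcases fin2_cases hj l with rfl | rfl
      · exact le_refl _
      · exact hbj.le
  have hub_j : ∀ x ∈ Simp 2, purePay A x j ≤ A i j := by
    intro x hxS
    have hxS' := (mem_simp' hi).1 hxS
    rw [pp_expand hi]
    have hsum : x i * A i j + x i' * A i j = A i j := by rw [← add_mul, hxS'.2, one_mul]
    nlinarith [mul_nonneg hxS'.1.2 (sub_pos.2 hdj).le]
  have hub_j' : ∀ x ∈ Simp 2, purePay B x j ≤ purePay B x j' →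
      purePay A x j' ≤ purePay A xs j' := by
    intro x hxS hreg
    have hxS' := (mem_simp' hi).1 hxS
    have h1 : x i ≤ xs i := hcmp2 x hxS hreg
    have e1 : x i' = 1 - x i := by linarith [hxS'.2]
    have e2 : xs i' = 1 - xs i := by linarith [hxsS'.2]
    rw [pp_expand hi, pp_expand hi, e1, e2]
    nlinarith [mul_nonneg (sub_nonneg.2 h1) (sub_pos.2 hdj').le]
  have hxsjlt : purePay A xs j < A i j := by
    rw [pp_expand hi]
    have e2 : xs i' = 1 - xs i := by linarith [hxsS'.2]
    have hp : 0 < 1 - xs i := by rw [← e2]; exact hxspos i'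
    rw [e2]
    nlinarith [mul_pos hp (sub_pos.2 hdj)]
  have hconv : ∀ z : Fin 2 → ℝ, purePay B z j = purePay B z j' →
      purePay B z 0 = purePay B z 1 := by
    intro z h
    rcases fin2_pair hj with ⟨rfl, rfl⟩ | ⟨rfl, rfl⟩
    · exact h
    · exact h.symm
  have hconv' : ∀ z : Fin 2 → ℝ, purePay B z 0 = purePay B z 1 →
      purePay B z j = purePay B z j' := by
    intro z h
    rcases fin2_pair hj with ⟨rfl, rfl⟩ | ⟨rfl, rfl⟩
    · exact h
    · exact h.symm
  -- ℓ1 always holds here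
  have hl1 : ∃ i₀ : Fin 2, ∃ x' ∈ Simp 2,
      ∀ l : Fin 2, purePay A (Pi.single i₀ (1:ℝ)) l < purePay A x' l := by
    refine ⟨i', Pi.single i (1:ℝ), ee_mem i, ?_⟩
    intro l
    rw [pp_single, pp_single]
    rcases fin2_cases hj l with rfl | rfl
    · exact hdj
    · exact hdj'
  -- the commitment optimal strategies of player II coincide with NE strategies
  have hppT : ∀ (y : Fin 2 → ℝ) (k : Fin 2),
      purePay Aᵀ y k = A k j * y j + A k j' * y j' := by
    intro y k
    rw [pp_expand hj Aᵀ y k]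
    simp [Matrix.transpose_apply]; ring
  have hppBT : ∀ (y : Fin 2 → ℝ) (l : Fin 2),
      purePay Bᵀ y l = y j * B l j + y j' * B l j' := by
    intro y l
    rw [pp_expand hj Bᵀ y l]
    simp [Matrix.transpose_apply]
  have hBRT : ∀ y ∈ Simp 2, ∀ l : Fin 2, l ∈ BRII Aᵀ y ↔ l = i := by
    intro y hyS l
    have hrd := hRdiff y hyS
    constructor
    · intro hl
      rcases fin2_cases hi l with rfl | rfl
      · rfl
      · exfalso
        have := hl i
        rw [hppT, hppT] at this
        linarith
    · rintro rfl
      intro k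
      rw [hppT, hppT]
      rcases fin2_cases hi k with rfl | rfl
      · exact le_refl _
      · exact hrd.le
  have hANe : ∃ r : Fin 2, Aᵀ r i ≠ Aᵀ r i' := ⟨j, by simpa [Matrix.transpose_apply] using hdj.ne'⟩
  have hDTi : i ∈ Dset Aᵀ := by
    refine ⟨fun _ => (1:ℝ)/2, ⟨?_, ?_⟩, fun k => by norm_num⟩
    · rw [mem_simp]; norm_num
    · exact (hBRT _ (by rw [mem_simp]; norm_num) i).2 rfl
  have hDT : ∀ l ∈ Dset Aᵀ, l = i := by
    rintro l ⟨y, ⟨hyS, hyBR⟩, -⟩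
    exact (hBRT y hyS l).1 hyBR
  have hejXRT : Pi.single j (1:ℝ) ∈ XReg Aᵀ i :=
    ⟨ee_mem j, (hBRT _ (ee_mem j) i).2 rfl⟩
  have hvalej : purePay Bᵀ (Pi.single j (1:ℝ)) i = B i j := by
    rw [hppBT, Pi.single_eq_same, Pi.single_eq_of_ne hj.symm]; ring
  have halphaT : alphaL Bᵀ Aᵀ = B i j := by
    refine sSup_eq_of ⟨i, hDTi, Pi.single j (1:ℝ), hejXRT, ?_⟩ ?_
    · rw [minE_eq hi hANe, hvalej]
    · rintro v ⟨l, hlD, y, ⟨hyS, hyBR⟩, rfl⟩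
      have hli := hDT l hlD
      rw [minE_eq hi hANe, hli, hppBT]
      have hyS' := (mem_simp' hj).1 hyS
      have hsum : y j * B i j + y j' * B i j = B i j := by rw [← add_mul, hyS'.2, one_mul]
      nlinarith [mul_nonneg hyS'.1.2 (sub_pos.2 hbj).le]
  have hYL : XLset Bᵀ Aᵀ = NEY A B := by
    ext y
    constructor
    · rintro ⟨l, hlD, ⟨hyS, hyBR⟩, hminT⟩
      have hli := hDT l hlD
      rw [hli] at hminT
      rw [minE_eq hi hANe, halphaT, hppBT] at hminT
      have hyS' := (mem_simp' hj).1 hyS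
      have hyj' : y j' = 0 := by
        by_contra hne
        have hpos : 0 < y j' := lt_of_le_of_ne hyS'.1.2 (Ne.symm hne)
        have e1 : y j = 1 - y j' := by linarith [hyS'.2]
        rw [e1] at hminT
        nlinarith [mul_pos hpos (sub_pos.2 hbj)]
      have hyej : y = Pi.single j (1:ℝ) := by
        refine funext2 hj ?_ ?_
        · rw [Pi.single_eq_same]; linarith [hyS'.2]
        · rw [Pi.single_eq_of_ne hj.symm]; exact hyj'
      rw [hyej]
      exact ⟨Pi.single i (1:ℝ), hNE⟩
    · rintro ⟨x, hNE'⟩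
      have hyej := (huniq x y hNE').2
      rw [hyej]
      exact ⟨i, hDTi, hejXRT, by rw [minE_eq hi hANe, halphaT, hvalej]⟩
  -- main case distinction
  by_cases hc : A i j ≤ purePay A xs j'
  · -- commitment value strictly better (or equal): xs is optimal and not a NE strategy
    have halpha : alphaL A B = purePay A xs j' := by
      refine sSup_eq_of ⟨j', hDj', xs, ⟨hxsS, hxsBR j'⟩, (minE_eq hj hBne j' xs).symm⟩ ?_
      rintro v ⟨l, hlD, x, ⟨hxS, hxBR⟩, rfl⟩
      rw [minE_eq hj hBne]
      rcases fin2_cases hj l with hq | hq <;> rw [hq] at hxBR ⊢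
      · exact le_trans (hub_j x hxS) hc
      · exact hub_j' x hxS (hxBR j)
    have hXLxs : xs ∈ XLset A B :=
      ⟨j', hDj', ⟨hxsS, hxsBR j'⟩, by rw [minE_eq hj hBne, halpha]⟩
    have hnotNE : xs ∉ NEX A B := by
      rintro ⟨y, h⟩
      have hx := (huniq xs y h).1
      have h2 := congrFun hx i'
      rw [Pi.single_eq_of_ne hi.symm] at h2
      exact (hxspos i').ne' h2
    have hLHS : ∃ xL ∈ XLset A B, xL ∉ NEX A B := ⟨xs, hXLxs, hnotNE⟩
    have hl2 : ∃ xd ∈ Simp 2, purePay B xd 0 = purePay B xd 1 ∧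
        ∀ (xN yN : Fin 2 → ℝ), isNE A B xN yN →
          ∃ l : Fin 2, pay A xN yN ≤ purePay A xd l := by
      refine ⟨xs, hxsS, hconv xs hxseq, ?_⟩
      intro xN yN h
      obtain ⟨hx, hy⟩ := huniq xN yN h
      rw [hx, hy, pay_ee]
      exact ⟨j', hc⟩
    exact ⟨iff_of_true hLHS ⟨hl1, hl2⟩, fun _ => hYL⟩
  · -- commitment value equals the NE payoff; the only optimal strategy is the NE strategy
    have hc' : purePay A xs j' < A i j := lt_of_not_ge hc
    have halpha : alphaL A B = A i j := by
      refine sSup_eq_of ⟨j, hDj, Pi.single i (1:ℝ), hei, ?_⟩ ?_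
      · rw [minE_eq hj hBne, pp_single]
      · rintro v ⟨l, hlD, x, ⟨hxS, hxBR⟩, rfl⟩
        rw [minE_eq hj hBne]
        rcases fin2_cases hj l with hq | hq <;> rw [hq] at hxBR ⊢
        · exact hub_j x hxS
        · exact le_trans (hub_j' x hxS (hxBR j)) hc'.le
    have hsub : ∀ x ∈ XLset A B, x ∈ NEX A B := by
      rintro x ⟨l, hlD, ⟨hxS, hxBR⟩, hmin⟩
      rw [minE_eq hj hBne, halpha] at hmin
      rcases fin2_cases hj l with hq | hq <;> rw [hq] at hxBR hmin
      · have hxS' := (mem_simp' hi).1 hxS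
        have e1 : x i' = 1 - x i := by linarith [hxS'.2]
        rw [pp_expand hi, e1] at hmin
        have hxi1 : x i = 1 := by
          by_contra hne
          have hlt : x i < 1 := lt_of_le_of_ne (by linarith [hxS'.1.2]) hne
          nlinarith [mul_pos (sub_pos.2 hlt) (sub_pos.2 hdj)]
        have hxe : x = Pi.single i (1:ℝ) := by
          refine funext2 hi ?_ ?_
          · rw [Pi.single_eq_same]; exact hxi1
          · rw [Pi.single_eq_of_ne hi.symm]; rw [e1, hxi1]; ring
        rw [hxe]
        exact ⟨Pi.single j (1:ℝ), hNE⟩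
      · exfalso
        have := hub_j' x hxS (hxBR j)
        linarith
    have hLfalse : ¬ ∃ xL ∈ XLset A B, xL ∉ NEX A B := by
      rintro ⟨x, hx, hn⟩
      exact hn (hsub x hx)
    have hl2false : ¬ ∃ xd ∈ Simp 2, purePay B xd 0 = purePay B xd 1 ∧
        ∀ (xN yN : Fin 2 → ℝ), isNE A B xN yN →
          ∃ l : Fin 2, pay A xN yN ≤ purePay A xd l := by
      rintro ⟨xd, hxdS, heq01, hall⟩
      have hxd : xd = xs := hxsuniq xd hxdS (hconv' xd heq01)
      obtain ⟨l, hle⟩ := hall (Pi.single i (1:ℝ)) (Pi.single j (1:ℝ)) hNE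
      rw [pay_ee, hxd] at hle
      rcases fin2_cases hj l with hq | hq <;> rw [hq] at hle
      · exact absurd hle (not_le.2 hxsjlt)
      · exact absurd hle (not_le.2 hc')
    exact ⟨iff_of_false hLfalse (by rintro ⟨-, l2⟩; exact hl2false l2), fun h => absurd h hLfalse⟩

lemma nondeg_ne {B : Matrix (Fin 2) (Fin 2) ℝ} (hnd : NondegFor B) (r : Fin 2) :
    B r 0 ≠ B r 1 := by
  intro heq
  have h := hnd (Pi.single r (1:ℝ)) (ee_mem r)
  have h1 : BRII B (Pi.single r (1:ℝ)) = Set.univ := by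
    ext k
    simp only [BRII, Set.mem_setOf_eq, Set.mem_univ, iff_true]
    intro l
    rw [pp_single, pp_single]
    fin_cases k <;> fin_cases l <;>
      first
        | exact le_refl _
        | exact le_of_eq heq
        | exact le_of_eq heq.symm
  have h2 : {i | (Pi.single r (1:ℝ) : Fin 2 → ℝ) i ≠ 0} = {r} := by
    ext k
    by_cases hk : k = r
    · subst hk; simp
    · simp [Pi.single_eq_of_ne hk, hk]
  rw [h1, h2, Set.ncard_univ, Set.ncard_singleton] at h
  simp [Nat.card_eq_fintype_card] at h

theorem stmt14 (A B : Matrix (Fin 2) (Fin 2) ℝ) (hnd : NondegFor B) :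
    ((∃ xL ∈ XLset A B, xL ∉ NEX A B) ↔
      ((∃ i : Fin 2, ∃ x' ∈ Simp 2,
          ∀ j : Fin 2, purePay A (Pi.single i (1 : ℝ)) j < purePay A x' j) ∧
       (∃ xd ∈ Simp 2, purePay B xd 0 = purePay B xd 1 ∧
          ∀ (xN yN : Fin 2 → ℝ), isNE A B xN yN →
            ∃ j : Fin 2, pay A xN yN ≤ purePay A xd j))) ∧
    ((∃ xL ∈ XLset A B, xL ∉ NEX A B) → XLset Bᵀ Aᵀ = NEY A B) := by
  show MGoal A B
  have h0 := nondeg_ne hnd 0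
  have h1 := nondeg_ne hnd 1
  rcases lt_or_gt_of_ne h0 with hb0 | hb0 <;> rcases lt_or_gt_of_ne h1 with hb1 | hb1
  · -- column 1 strictly dominant for player II
    refine M0 (j := 1) (j' := 0) (by decide) ?_
    intro r; fin_cases r <;> assumption
  · -- B 0 0 < B 0 1, B 1 1 < B 1 0 : oriented with i = 0, j = 1
    rcases lt_trichotomy (A 1 1) (A 0 1) with hd1 | hd1 | hd1 <;>
      rcases lt_trichotomy (A 1 0) (A 0 0) with hd0 | hd0 | hd0
    · exact M1 (i := 0) (i' := 1) (j := 1) (j' := 0) (by decide) (by decide) hb0 hb1 hd1 hd0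
    · exact M2 (i := 0) (i' := 1) (j := 1) (j' := 0) (by decide) (by decide) hb0 hb1
        hd1.le (by linarith)
    · exact M2 (i := 0) (i' := 1) (j := 1) (j' := 0) (by decide) (by decide) hb0 hb1
        hd1.le hd0.le
    · exact M3 (i := 0) (i' := 1) (j := 1) (j' := 0) (by decide) (by decide) hb0 hb1
        (by linarith) hd0.le
    · exact M2 (i := 0) (i' := 1) (j := 1) (j' := 0) (by decide) (by decide) hb0 hb1
        (by linarith) (by linarith)
    · exact M2 (i := 0) (i' := 1) (j := 1) (j' := 0) (by decide) (by decide) hb0 hb1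
        (by linarith) hd0.le
    · exact M3 (i := 0) (i' := 1) (j := 1) (j' := 0) (by decide) (by decide) hb0 hb1
        hd1.le hd0.le
    · exact M3 (i := 0) (i' := 1) (j := 1) (j' := 0) (by decide) (by decide) hb0 hb1
        hd1.le (by linarith)
    · exact M1 (i := 1) (i' := 0) (j := 0) (j' := 1) (by decide) (by decide) hb1 hb0 hd0 hd1
  · -- B 0 1 < B 0 0, B 1 0 < B 1 1 : oriented with i = 0, j = 0
    rcases lt_trichotomy (A 1 0) (A 0 0) with hd0 | hd0 | hd0 <;>
      rcases lt_trichotomy (A 1 1) (A 0 1) with hd1 | hd1 | hd1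
    · exact M1 (i := 0) (i' := 1) (j := 0) (j' := 1) (by decide) (by decide) hb0 hb1 hd0 hd1
    · exact M2 (i := 0) (i' := 1) (j := 0) (j' := 1) (by decide) (by decide) hb0 hb1
        hd0.le (by linarith)
    · exact M2 (i := 0) (i' := 1) (j := 0) (j' := 1) (by decide) (by decide) hb0 hb1
        hd0.le hd1.le
    · exact M3 (i := 0) (i' := 1) (j := 0) (j' := 1) (by decide) (by decide) hb0 hb1
        (by linarith) hd1.le
    · exact M2 (i := 0) (i' := 1) (j := 0) (j' := 1) (by decide) (by decide) hb0 hb1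
        (by linarith) (by linarith)
    · exact M2 (i := 0) (i' := 1) (j := 0) (j' := 1) (by decide) (by decide) hb0 hb1
        (by linarith) hd1.le
    · exact M3 (i := 0) (i' := 1) (j := 0) (j' := 1) (by decide) (by decide) hb0 hb1
        hd0.le hd1.le
    · exact M3 (i := 0) (i' := 1) (j := 0) (j' := 1) (by decide) (by decide) hb0 hb1
        hd0.le (by linarith)
    · exact M1 (i := 1) (i' := 0) (j := 1) (j' := 0) (by decide) (by decide) hb1 hb0 hd1 hd0
  · -- column 0 strictly dominant for player II
    refine M0 (j := 0) (j' := 1) (by decide) ?_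
    intro r; fin_cases r <;> assumption
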